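/- Let f : ℝ² → ℝ be twice continuously differentiable on the open upper half-plane {ξ₂ > 0} and harmonic there (∂²f/∂ξ₁² + ∂²f/∂ξ₂² = 0), and suppose there exist C > 0 and α > 0 such that |f(ξ)|, |∇f(ξ)| and all second partial derivatives of f at ξ are bounded by C e^{−α ξ₂} for all ξ with ξ₂ > 0. Then the function F(ξ₁, ξ₂) = −(ξ₂/2) ∫_{ξ₂}^∞ f(ξ₁, t) dt is twice continuously differentiable on the open upper half-plane and satisfies ∂²F/∂ξ₁² + ∂²F/∂ξ₂² = f there. (This is the construction used for the boundary-layer corrector X_η¹ in the proof of Lemma 5.2, and for the analogous terms ∫_{ξ₂}^∞ t X(ξ₁,t) dt in the boundary layer of Theorem 1.1.) -/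

import Mathlib

set_option maxHeartbeats 2000000
set_option synthInstance.maxHeartbeats 200000

open MeasureTheory Set Filter Topology
lemma opnorm_prod_le {E : Type*} [NormedAddCommGroup E] [NormedSpace ℝ E] (L : ℝ × ℝ →L[ℝ] E) :
    ‖L‖ ≤ ‖L (1, 0)‖ + ‖L (0, 1)‖ := by
  refine L.opNorm_le_bound (by positivity) fun x => ?_
  have hx : x = x.1 • ((1 : ℝ), (0 : ℝ)) + x.2 • ((0 : ℝ), (1 : ℝ)) := by
    ext <;> simp
  calc ‖L x‖ = ‖x.1 • L (1, 0) + x.2 • L (0, 1)‖ := by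
        conv_lhs => rw [hx]
        rw [map_add, L.map_smul, L.map_smul]
    _ ≤ ‖x.1 • L (1, 0)‖ + ‖x.2 • L (0, 1)‖ := norm_add_le _ _
    _ ≤ ‖x‖ * ‖L (1, 0)‖ + ‖x‖ * ‖L (0, 1)‖ := by
        rw [norm_smul, norm_smul]
        gcongr
        · exact norm_fst_le x
        · exact norm_snd_le x
    _ = (‖L (1, 0)‖ + ‖L (0, 1)‖) * ‖x‖ := by ring

lemma integrableOn_of_expbound {E : Type*} [NormedAddCommGroup E] (h : ℝ → E) (a c β : ℝ)
    (hβ : 0 < β) (hm : AEStronglyMeasurable h (volume.restrict (Ioi a)))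
    (hb : ∀ s ∈ Ioi a, ‖h s‖ ≤ c * Real.exp (-β * s)) : IntegrableOn h (Ioi a) :=
  (((exp_neg_integrableOn_Ioi a hβ).const_mul c).mono' hm
    ((ae_restrict_mem measurableSet_Ioi).mono hb))

lemma tendsto_expbound (c β : ℝ) (hβ : 0 < β) :
    Tendsto (fun t : ℝ => c * Real.exp (-β * t)) atTop (𝓝 0) := by
  have h1 : Tendsto (fun t : ℝ => β * t) atTop atTop :=
    Tendsto.const_mul_atTop hβ tendsto_id
  have h2 : Tendsto (fun t : ℝ => Real.exp (-(β * t))) atTop (𝓝 0) :=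
    Real.tendsto_exp_neg_atTop_nhds_zero.comp h1
  have := h2.const_mul c
  simpa [neg_mul] using this

lemma ball_snd_gt {ξ x : ℝ × ℝ} {ε : ℝ} (hx : x ∈ Metric.ball ξ ε) : ξ.2 - ε < x.2 := by
  have h1 : dist x.2 ξ.2 ≤ dist x ξ := by
    rw [Prod.dist_eq]; exact le_max_right _ _
  have h2 : dist x ξ < ε := hx
  have := lt_of_le_of_lt h1 h2
  rw [Real.dist_eq, abs_lt] at this
  linarith [this.1]

lemma psi_hasFDerivAt {E : Type*} [NormedAddCommGroup E] [NormedSpace ℝ E] [CompleteSpace E]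
    (g : ℝ × ℝ → E) (g' : ℝ × ℝ → (ℝ × ℝ →L[ℝ] E)) (K β : ℝ) (hβ : 0 < β) (hK : 0 ≤ K)
    (hgc : ContinuousOn g {ξ : ℝ × ℝ | 0 < ξ.2})
    (hg'c : ContinuousOn g' {ξ : ℝ × ℝ | 0 < ξ.2})
    (hd : ∀ ξ : ℝ × ℝ, 0 < ξ.2 → HasFDerivAt g (g' ξ) ξ)
    (hbg : ∀ ξ : ℝ × ℝ, 0 < ξ.2 → ‖g ξ‖ ≤ K * Real.exp (-β * ξ.2))
    (hbg' : ∀ ξ : ℝ × ℝ, 0 < ξ.2 → ‖g' ξ‖ ≤ K * Real.exp (-β * ξ.2))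
    (ξ : ℝ × ℝ) (hξ : 0 < ξ.2) :
    HasFDerivAt (fun x : ℝ × ℝ => ∫ s in Ioi (0:ℝ), g (x.1, x.2 + s))
      (∫ s in Ioi (0:ℝ), g' (ξ.1, ξ.2 + s)) ξ := by
  set ε : ℝ := ξ.2 / 2 with hε
  have hεpos : 0 < ε := by positivity
  -- membership facts
  have hmem : ∀ x ∈ Metric.ball ξ ε, ε < x.2 := by
    intro x hx
    have := ball_snd_gt hx
    linarith
  -- measurability of slices
  have hmeas : ∀ x : ℝ × ℝ, 0 < x.2 →
      AEStronglyMeasurable (fun s => g (x.1, x.2 + s)) (volume.restrict (Ioi (0:ℝ))) := by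
    intro x hx
    refine (ContinuousOn.aestronglyMeasurable ?_ measurableSet_Ioi)
    refine hgc.comp (Continuous.continuousOn (by fun_prop)) ?_
    intro s hs
    simp only [Set.mem_setOf_eq]
    have : (0:ℝ) < s := hs
    linarith
  have hmeas' : ∀ x : ℝ × ℝ, 0 < x.2 →
      AEStronglyMeasurable (fun s => g' (x.1, x.2 + s)) (volume.restrict (Ioi (0:ℝ))) := by
    intro x hx
    refine (ContinuousOn.aestronglyMeasurable ?_ measurableSet_Ioi)
    refine hg'c.comp (Continuous.continuousOn (by fun_prop)) ?_
    intro s hs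
    simp only [Set.mem_setOf_eq]
    have : (0:ℝ) < s := hs
    linarith
  have key := hasFDerivAt_integral_of_dominated_of_fderiv_le
    (F := fun (x : ℝ × ℝ) (s : ℝ) => g (x.1, x.2 + s))
    (F' := fun (x : ℝ × ℝ) (s : ℝ) => g' (x.1, x.2 + s))
    (x₀ := ξ) (bound := fun s => (K * Real.exp (-β * ε)) * Real.exp (-β * s))
    (μ := volume.restrict (Ioi (0:ℝ))) (Metric.ball_mem_nhds ξ hεpos) ?_ ?_ ?_ ?_ ?_ ?_
  · exact key
  · filter_upwards [Metric.ball_mem_nhds ξ hεpos] with x hx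
    exact hmeas x (lt_trans hεpos (hmem x hx))
  · refine integrableOn_of_expbound _ _ (K * Real.exp (-β * ξ.2)) β hβ (hmeas ξ hξ) ?_
    intro s hs
    have h0 : (0:ℝ) < ξ.2 + s := by have : (0:ℝ) < s := hs; linarith
    calc ‖g (ξ.1, ξ.2 + s)‖ ≤ K * Real.exp (-β * (ξ.2 + s)) := by
          simpa using hbg (ξ.1, ξ.2 + s) h0
      _ = K * Real.exp (-β * ξ.2) * Real.exp (-β * s) := by
          rw [mul_assoc, ← Real.exp_add]; ring_nf
  · exact hmeas' ξ hξ
  · filter_upwards [ae_restrict_mem measurableSet_Ioi] with s hs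
    intro x hx
    have h1 : ε < x.2 := hmem x hx
    have hs' : (0:ℝ) < s := hs
    have h2 : 0 < x.2 + s := by linarith
    calc ‖g' (x.1, x.2 + s)‖ ≤ K * Real.exp (-β * (x.2 + s)) := by
          simpa using hbg' (x.1, x.2 + s) h2
      _ ≤ K * Real.exp (-β * ε) * Real.exp (-β * s) := by
          rw [mul_assoc, ← Real.exp_add]
          refine mul_le_mul_of_nonneg_left (Real.exp_le_exp.2 (by nlinarith)) hK
  · exact ((exp_neg_integrableOn_Ioi (0:ℝ) hβ).const_mul _)
  · filter_upwards [ae_restrict_mem measurableSet_Ioi] with s hs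
    intro x hx
    have h1 : ε < x.2 := hmem x hx
    have hs' : (0:ℝ) < s := hs
    have h2 : 0 < x.2 + s := by linarith
    have hT : HasFDerivAt (fun y : ℝ × ℝ => (y.1, y.2 + s))
        (ContinuousLinearMap.id ℝ (ℝ × ℝ)) x := by
      have : (fun y : ℝ × ℝ => (y.1, y.2 + s)) = fun y : ℝ × ℝ => y + ((0:ℝ), s) := by
        funext y; ext <;> simp
      rw [this]
      simpa using (hasFDerivAt_id x).add_const ((0:ℝ), s)
    have := (hd (x.1, x.2 + s) h2).comp x hT
    rw [ContinuousLinearMap.comp_id] at this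
    exact this

lemma psi_continuousOn {E : Type*} [NormedAddCommGroup E] [NormedSpace ℝ E] [CompleteSpace E]
    (g : ℝ × ℝ → E) (K β : ℝ) (hβ : 0 < β) (hK : 0 ≤ K)
    (hgc : ContinuousOn g {ξ : ℝ × ℝ | 0 < ξ.2})
    (hbg : ∀ ξ : ℝ × ℝ, 0 < ξ.2 → ‖g ξ‖ ≤ K * Real.exp (-β * ξ.2)) :
    ContinuousOn (fun x : ℝ × ℝ => ∫ s in Ioi (0:ℝ), g (x.1, x.2 + s))
      {ξ : ℝ × ℝ | 0 < ξ.2} := by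
  intro ξ hξ
  have hξ2 : (0:ℝ) < ξ.2 := hξ
  set ε : ℝ := ξ.2 / 2 with hε
  have hεpos : 0 < ε := by positivity
  have hmeas : ∀ x : ℝ × ℝ, 0 < x.2 →
      AEStronglyMeasurable (fun s => g (x.1, x.2 + s)) (volume.restrict (Ioi (0:ℝ))) := by
    intro x hx
    refine (ContinuousOn.aestronglyMeasurable ?_ measurableSet_Ioi)
    refine hgc.comp (Continuous.continuousOn (by fun_prop)) ?_
    intro s hs
    simp only [Set.mem_setOf_eq]
    have : (0:ℝ) < s := hs
    linarith
  have hball : Metric.ball ξ ε ∈ 𝓝 ξ := Metric.ball_mem_nhds ξ hεpos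
  refine ContinuousAt.continuousWithinAt ?_
  refine continuousAt_of_dominated (bound := fun s => (K * Real.exp (-β * ε)) * Real.exp (-β * s)) ?_ ?_ ?_ ?_
  · filter_upwards [hball] with x hx
    exact hmeas x (lt_trans hεpos (by have := ball_snd_gt hx; linarith))
  · filter_upwards [hball] with x hx
    filter_upwards [ae_restrict_mem measurableSet_Ioi] with s hs
    have h1 : ε < x.2 := by have := ball_snd_gt hx; linarith
    have hs' : (0:ℝ) < s := hs
    have h2 : 0 < x.2 + s := by linarith
    calc ‖g (x.1, x.2 + s)‖ ≤ K * Real.exp (-β * (x.2 + s)) := by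
          simpa using hbg (x.1, x.2 + s) h2
      _ ≤ K * Real.exp (-β * ε) * Real.exp (-β * s) := by
          rw [mul_assoc, ← Real.exp_add]
          refine mul_le_mul_of_nonneg_left (Real.exp_le_exp.2 (by nlinarith)) hK
  · exact ((exp_neg_integrableOn_Ioi (0:ℝ) hβ).const_mul _)
  · filter_upwards [ae_restrict_mem measurableSet_Ioi] with s hs
    have hs' : (0:ℝ) < s := hs
    have hm : (ξ.1, ξ.2 + s) ∈ {ξ : ℝ × ℝ | 0 < ξ.2} := by
      simp only [Set.mem_setOf_eq]; linarith
    have hct : ContinuousAt g (ξ.1, ξ.2 + s) :=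
      hgc.continuousAt ((isOpen_lt continuous_const continuous_snd).mem_nhds hm)
    have hmap : ContinuousAt (fun x : ℝ × ℝ => (x.1, x.2 + s)) ξ := by fun_prop
    exact ContinuousAt.comp (f := fun x : ℝ × ℝ => (x.1, x.2 + s)) hct hmap

theorem corrector_solves_poisson (f : ℝ × ℝ → ℝ) (C α : ℝ) (hC : 0 < C) (hα : 0 < α)
    (hf : ContDiffOn ℝ 2 f {ξ : ℝ × ℝ | 0 < ξ.2})
    (hharm : ∀ ξ : ℝ × ℝ, 0 < ξ.2 →
      iteratedDeriv 2 (fun u => f (u, ξ.2)) ξ.1 +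
        iteratedDeriv 2 (fun t => f (ξ.1, t)) ξ.2 = 0)
    (hdecay : ∀ ξ : ℝ × ℝ, 0 < ξ.2 → |f ξ| ≤ C * Real.exp (-α * ξ.2))
    (hdecay₁ : ∀ ξ : ℝ × ℝ, 0 < ξ.2 →
      |deriv (fun u => f (u, ξ.2)) ξ.1| ≤ C * Real.exp (-α * ξ.2) ∧
      |deriv (fun t => f (ξ.1, t)) ξ.2| ≤ C * Real.exp (-α * ξ.2))
    (hdecay₂ : ∀ ξ : ℝ × ℝ, 0 < ξ.2 →
      |iteratedDeriv 2 (fun u => f (u, ξ.2)) ξ.1| ≤ C * Real.exp (-α * ξ.2) ∧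
      |iteratedDeriv 2 (fun t => f (ξ.1, t)) ξ.2| ≤ C * Real.exp (-α * ξ.2) ∧
      |deriv (fun u => deriv (fun t => f (u, t)) ξ.2) ξ.1| ≤ C * Real.exp (-α * ξ.2) ∧
      |deriv (fun t => deriv (fun u => f (u, t)) ξ.1) ξ.2| ≤ C * Real.exp (-α * ξ.2)) :
    ContDiffOn ℝ 2
      (fun ξ : ℝ × ℝ => -(ξ.2 / 2) * ∫ t in Set.Ioi ξ.2, f (ξ.1, t))
      {ξ : ℝ × ℝ | 0 < ξ.2} ∧
    ∀ ξ : ℝ × ℝ, 0 < ξ.2 →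
      iteratedDeriv 2
          (fun u => -(ξ.2 / 2) * ∫ t in Set.Ioi ξ.2, f (u, t)) ξ.1 +
        iteratedDeriv 2
          (fun x₂ => -(x₂ / 2) * ∫ t in Set.Ioi x₂, f (ξ.1, t)) ξ.2 = f ξ := by
  have hUopen : IsOpen {ξ : ℝ × ℝ | 0 < ξ.2} := isOpen_lt continuous_const continuous_snd
  have hdiff : ∀ ξ : ℝ × ℝ, 0 < ξ.2 → DifferentiableAt ℝ f ξ := fun ξ h =>
    (hf.differentiableOn (by norm_num)).differentiableAt (hUopen.mem_nhds h)
  have hg1 : ContDiffOn ℝ 1 (fderiv ℝ f) {ξ : ℝ × ℝ | 0 < ξ.2} :=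
    hf.fderiv_of_isOpen hUopen (by norm_num)
  have hg1c : ContinuousOn (fderiv ℝ f) {ξ : ℝ × ℝ | 0 < ξ.2} := hg1.continuousOn
  have hg1d : ∀ ξ : ℝ × ℝ, 0 < ξ.2 → DifferentiableAt ℝ (fderiv ℝ f) ξ := fun ξ h =>
    (hg1.differentiableOn (by norm_num)).differentiableAt (hUopen.mem_nhds h)
  have hg2c : ContinuousOn (fderiv ℝ (fderiv ℝ f)) {ξ : ℝ × ℝ | 0 < ξ.2} :=
    hg1.continuousOn_fderiv_of_isOpen hUopen le_rfl
  have hfc : ContinuousOn f {ξ : ℝ × ℝ | 0 < ξ.2} := hf.continuousOn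
  -- first partial derivatives
  have hP1 : ∀ ξ : ℝ × ℝ, 0 < ξ.2 →
      HasDerivAt (fun u => f (u, ξ.2)) (fderiv ℝ f ξ (1, 0)) ξ.1 := by
    intro ξ hξ
    have hT : HasDerivAt (fun u : ℝ => ((u, ξ.2) : ℝ × ℝ)) ((1 : ℝ), (0 : ℝ)) ξ.1 :=
      (hasDerivAt_id ξ.1).prodMk (hasDerivAt_const ξ.1 ξ.2)
    exact ((hdiff ξ hξ).hasFDerivAt).comp_hasDerivAt ξ.1 hT
  have hP2 : ∀ ξ : ℝ × ℝ, 0 < ξ.2 →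
      HasDerivAt (fun t => f (ξ.1, t)) (fderiv ℝ f ξ (0, 1)) ξ.2 := by
    intro ξ hξ
    have hT : HasDerivAt (fun t : ℝ => ((ξ.1, t) : ℝ × ℝ)) ((0 : ℝ), (1 : ℝ)) ξ.2 :=
      (hasDerivAt_const ξ.2 ξ.1).prodMk (hasDerivAt_id ξ.2)
    exact ((hdiff ξ hξ).hasFDerivAt).comp_hasDerivAt ξ.2 hT
  have hd1 : ∀ ξ : ℝ × ℝ, 0 < ξ.2 →
      deriv (fun u => f (u, ξ.2)) ξ.1 = fderiv ℝ f ξ (1, 0) := fun ξ h => (hP1 ξ h).deriv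
  have hd2 : ∀ ξ : ℝ × ℝ, 0 < ξ.2 →
      deriv (fun t => f (ξ.1, t)) ξ.2 = fderiv ℝ f ξ (0, 1) := fun ξ h => (hP2 ξ h).deriv
  -- second partial derivatives
  have hQ1 : ∀ ξ : ℝ × ℝ, 0 < ξ.2 →
      HasDerivAt (fun u => fderiv ℝ f (u, ξ.2)) (fderiv ℝ (fderiv ℝ f) ξ (1, 0)) ξ.1 := by
    intro ξ hξ
    have hT : HasDerivAt (fun u : ℝ => ((u, ξ.2) : ℝ × ℝ)) ((1 : ℝ), (0 : ℝ)) ξ.1 :=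
      (hasDerivAt_id ξ.1).prodMk (hasDerivAt_const ξ.1 ξ.2)
    exact ((hg1d ξ hξ).hasFDerivAt).comp_hasDerivAt ξ.1 hT
  have hQ2 : ∀ ξ : ℝ × ℝ, 0 < ξ.2 →
      HasDerivAt (fun t => fderiv ℝ f (ξ.1, t)) (fderiv ℝ (fderiv ℝ f) ξ (0, 1)) ξ.2 := by
    intro ξ hξ
    have hT : HasDerivAt (fun t : ℝ => ((ξ.1, t) : ℝ × ℝ)) ((0 : ℝ), (1 : ℝ)) ξ.2 :=
      (hasDerivAt_const ξ.2 ξ.1).prodMk (hasDerivAt_id ξ.2)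
    exact ((hg1d ξ hξ).hasFDerivAt).comp_hasDerivAt ξ.2 hT
  have hQ1v : ∀ ξ : ℝ × ℝ, 0 < ξ.2 → ∀ v : ℝ × ℝ,
      HasDerivAt (fun u => fderiv ℝ f (u, ξ.2) v)
        (fderiv ℝ (fderiv ℝ f) ξ (1, 0) v) ξ.1 := by
    intro ξ hξ v
    have := (hQ1 ξ hξ).clm_apply (hasDerivAt_const ξ.1 v)
    simpa using this
  have hQ2v : ∀ ξ : ℝ × ℝ, 0 < ξ.2 → ∀ v : ℝ × ℝ,
      HasDerivAt (fun t => fderiv ℝ f (ξ.1, t) v)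
        (fderiv ℝ (fderiv ℝ f) ξ (0, 1) v) ξ.2 := by
    intro ξ hξ v
    have := (hQ2 ξ hξ).clm_apply (hasDerivAt_const ξ.2 v)
    simpa using this
  -- identification of iterated/mixed second derivatives
  have hdd1 : ∀ ξ : ℝ × ℝ, 0 < ξ.2 →
      iteratedDeriv 2 (fun u => f (u, ξ.2)) ξ.1 = fderiv ℝ (fderiv ℝ f) ξ (1, 0) (1, 0) := by
    intro ξ hξ
    have hde : deriv (fun u => f (u, ξ.2)) = fun u => fderiv ℝ f (u, ξ.2) (1, 0) := by
      funext u
      simpa using hd1 (u, ξ.2) hξ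
    rw [show (2 : ℕ) = 1 + 1 from rfl, iteratedDeriv_succ, iteratedDeriv_one, hde]
    exact (hQ1v ξ hξ (1, 0)).deriv
  have hdd2 : ∀ ξ : ℝ × ℝ, 0 < ξ.2 →
      iteratedDeriv 2 (fun t => f (ξ.1, t)) ξ.2 = fderiv ℝ (fderiv ℝ f) ξ (0, 1) (0, 1) := by
    intro ξ hξ
    have hev : deriv (fun t => f (ξ.1, t)) =ᶠ[𝓝 ξ.2] fun t => fderiv ℝ f (ξ.1, t) (0, 1) := by
      filter_upwards [Ioi_mem_nhds hξ] with t ht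
      simpa using hd2 (ξ.1, t) ht
    rw [show (2 : ℕ) = 1 + 1 from rfl, iteratedDeriv_succ, iteratedDeriv_one, hev.deriv_eq]
    exact (hQ2v ξ hξ (0, 1)).deriv
  have hdd12 : ∀ ξ : ℝ × ℝ, 0 < ξ.2 →
      deriv (fun u => deriv (fun t => f (u, t)) ξ.2) ξ.1
        = fderiv ℝ (fderiv ℝ f) ξ (1, 0) (0, 1) := by
    intro ξ hξ
    have hde : (fun u => deriv (fun t => f (u, t)) ξ.2) = fun u => fderiv ℝ f (u, ξ.2) (0, 1) := by
      funext u
      simpa using hd2 (u, ξ.2) hξ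
    rw [hde]
    exact (hQ1v ξ hξ (0, 1)).deriv
  have hdd21 : ∀ ξ : ℝ × ℝ, 0 < ξ.2 →
      deriv (fun t => deriv (fun u => f (u, t)) ξ.1) ξ.2
        = fderiv ℝ (fderiv ℝ f) ξ (0, 1) (1, 0) := by
    intro ξ hξ
    have hev : (fun t => deriv (fun u => f (u, t)) ξ.1) =ᶠ[𝓝 ξ.2]
        fun t => fderiv ℝ f (ξ.1, t) (1, 0) := by
      filter_upwards [Ioi_mem_nhds hξ] with t ht
      simpa using hd1 (ξ.1, t) ht
    rw [hev.deriv_eq]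
    exact (hQ2v ξ hξ (1, 0)).deriv
  -- bounds
  have hb0 : ∀ ξ : ℝ × ℝ, 0 < ξ.2 → ‖f ξ‖ ≤ 2 * C * Real.exp (-α * ξ.2) := by
    intro ξ hξ
    rw [Real.norm_eq_abs]
    nlinarith [hdecay ξ hξ, Real.exp_pos (-α * ξ.2)]
  have hb1' : ∀ ξ : ℝ × ℝ, 0 < ξ.2 → ‖fderiv ℝ f ξ‖ ≤ 2 * C * Real.exp (-α * ξ.2) := by
    intro ξ hξ
    refine (opnorm_prod_le _).trans ?_
    have h1 := (hdecay₁ ξ hξ).1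
    have h2 := (hdecay₁ ξ hξ).2
    rw [hd1 ξ hξ] at h1
    rw [hd2 ξ hξ] at h2
    rw [Real.norm_eq_abs, Real.norm_eq_abs]
    linarith
  have hb2 : ∀ ξ : ℝ × ℝ, 0 < ξ.2 →
      ‖fderiv ℝ (fderiv ℝ f) ξ‖ ≤ 4 * C * Real.exp (-α * ξ.2) := by
    intro ξ hξ
    obtain ⟨e11, e22, e12, e21⟩ := hdecay₂ ξ hξ
    rw [hdd1 ξ hξ] at e11
    rw [hdd2 ξ hξ] at e22
    rw [hdd12 ξ hξ] at e12
    rw [hdd21 ξ hξ] at e21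
    refine (opnorm_prod_le _).trans ?_
    have h1 := (opnorm_prod_le (fderiv ℝ (fderiv ℝ f) ξ (1, 0)))
    have h2 := (opnorm_prod_le (fderiv ℝ (fderiv ℝ f) ξ (0, 1)))
    rw [Real.norm_eq_abs, Real.norm_eq_abs] at h1 h2
    linarith
  -- harmonicity in fderiv form
  have hharm' : ∀ ξ : ℝ × ℝ, 0 < ξ.2 →
      fderiv ℝ (fderiv ℝ f) ξ (1, 0) (1, 0)
        = -(fderiv ℝ (fderiv ℝ f) ξ (0, 1) (0, 1)) := by
    intro ξ hξ
    have h := hharm ξ hξ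
    rw [hdd1 ξ hξ, hdd2 ξ hξ] at h
    linarith
  -- the shifted integral and its smoothness
  have hΦd : ∀ ξ : ℝ × ℝ, 0 < ξ.2 →
      HasFDerivAt (fun x : ℝ × ℝ => ∫ s in Ioi (0:ℝ), f (x.1, x.2 + s))
        (∫ s in Ioi (0:ℝ), fderiv ℝ f (ξ.1, ξ.2 + s)) ξ := by
    intro ξ hξ
    refine psi_hasFDerivAt f (fderiv ℝ f) (2 * C) α hα (by positivity) hfc hg1c
      (fun ξ h => (hdiff ξ h).hasFDerivAt) hb0 hb1' ξ hξ
  have hΦ₁d : ∀ ξ : ℝ × ℝ, 0 < ξ.2 →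
      HasFDerivAt (fun x : ℝ × ℝ => ∫ s in Ioi (0:ℝ), fderiv ℝ f (x.1, x.2 + s))
        (∫ s in Ioi (0:ℝ), fderiv ℝ (fderiv ℝ f) (ξ.1, ξ.2 + s)) ξ := by
    intro ξ hξ
    refine psi_hasFDerivAt (fderiv ℝ f) (fderiv ℝ (fderiv ℝ f)) (4 * C) α hα (by positivity)
      hg1c hg2c (fun ξ h => (hg1d ξ h).hasFDerivAt) ?_ hb2 ξ hξ
    intro ξ h
    refine (hb1' ξ h).trans ?_
    have := Real.exp_pos (-α * ξ.2)
    nlinarith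
  have hΦ₂c : ContinuousOn
      (fun x : ℝ × ℝ => ∫ s in Ioi (0:ℝ), fderiv ℝ (fderiv ℝ f) (x.1, x.2 + s))
      {ξ : ℝ × ℝ | 0 < ξ.2} :=
    psi_continuousOn (fderiv ℝ (fderiv ℝ f)) (4 * C) α hα (by positivity) hg2c hb2
  have hΦC2 : ContDiffOn ℝ 2 (fun x : ℝ × ℝ => ∫ s in Ioi (0:ℝ), f (x.1, x.2 + s))
      {ξ : ℝ × ℝ | 0 < ξ.2} := by
    rw [show (2 : WithTop ℕ∞) = 1 + 1 by norm_num, contDiffOn_succ_iff_fderiv_of_isOpen hUopen]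
    refine ⟨fun ξ hξ => (hΦd ξ hξ).differentiableAt.differentiableWithinAt, by simp, ?_⟩
    have h1 : ContDiffOn ℝ 1
        (fun x : ℝ × ℝ => ∫ s in Ioi (0:ℝ), fderiv ℝ f (x.1, x.2 + s))
        {ξ : ℝ × ℝ | 0 < ξ.2} := by
      rw [show (1 : WithTop ℕ∞) = 0 + 1 by norm_num, contDiffOn_succ_iff_fderiv_of_isOpen hUopen]
      refine ⟨fun ξ hξ => (hΦ₁d ξ hξ).differentiableAt.differentiableWithinAt, by simp, ?_⟩
      rw [contDiffOn_zero]
      exact hΦ₂c.congr (fun ξ hξ => (hΦ₁d ξ hξ).fderiv)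
    exact h1.congr (fun ξ hξ => (hΦd ξ hξ).fderiv)
  -- change of variables
  have hIeq : ∀ ξ : ℝ × ℝ, 0 < ξ.2 →
      (∫ t in Ioi ξ.2, f (ξ.1, t)) = ∫ s in Ioi (0:ℝ), f (ξ.1, ξ.2 + s) := by
    intro ξ hξ
    have h := (measurePreserving_add_right volume ξ.2).setIntegral_preimage_emb
      (measurableEmbedding_addRight ξ.2) (fun t => f (ξ.1, t)) (Ioi ξ.2)
    rw [← h]
    have hpre : (· + ξ.2) ⁻¹' (Ioi ξ.2) = Ioi (0:ℝ) := by ext x; simp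
    rw [hpre]
    refine setIntegral_congr_fun measurableSet_Ioi (fun s _ => ?_)
    simp [add_comm]
  -- slice continuity / measurability / integrability helpers
  have hsliceC : ∀ u : ℝ, ContinuousOn (fun t => f (u, t)) (Ioi (0:ℝ)) := by
    intro u
    refine hfc.comp (Continuous.continuousOn (by fun_prop)) ?_
    intro t ht
    exact ht
  have hg1sliceC : ∀ u : ℝ, ContinuousOn (fun t => fderiv ℝ f (u, t)) (Ioi (0:ℝ)) := by
    intro u
    refine hg1c.comp (Continuous.continuousOn (by fun_prop)) ?_
    intro t ht
    exact ht
  have hg2sliceC : ∀ u : ℝ,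
      ContinuousOn (fun t => fderiv ℝ (fderiv ℝ f) (u, t)) (Ioi (0:ℝ)) := by
    intro u
    refine hg2c.comp (Continuous.continuousOn (by fun_prop)) ?_
    intro t ht
    exact ht
  have hmeasf : ∀ (u a : ℝ), 0 ≤ a →
      AEStronglyMeasurable (fun t => f (u, t)) (volume.restrict (Ioi a)) := fun u a ha =>
    ((hsliceC u).mono (Ioi_subset_Ioi ha)).aestronglyMeasurable measurableSet_Ioi
  have hintf : ∀ (u a : ℝ), 0 ≤ a → IntegrableOn (fun t => f (u, t)) (Ioi a) := by
    intro u a ha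
    refine integrableOn_of_expbound _ a C α hα (hmeasf u a ha) ?_
    intro t ht
    have h0 : (0:ℝ) < t := lt_of_le_of_lt ha ht
    simpa [Real.norm_eq_abs] using hdecay (u, t) h0
  have hmeasd : ∀ (u a : ℝ) (v : ℝ × ℝ), 0 ≤ a →
      AEStronglyMeasurable (fun t => fderiv ℝ f (u, t) v) (volume.restrict (Ioi a)) :=
    fun u a v ha =>
    (((ContinuousLinearMap.apply ℝ ℝ v).continuous.comp_continuousOn
      ((hg1sliceC u).mono (Ioi_subset_Ioi ha))).aestronglyMeasurable measurableSet_Ioi)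
  have hmeasd2 : ∀ (u a : ℝ) (v w : ℝ × ℝ), 0 ≤ a →
      AEStronglyMeasurable (fun t => fderiv ℝ (fderiv ℝ f) (u, t) v w)
        (volume.restrict (Ioi a)) := by
    intro u a v w ha
    have h1 : ContinuousOn (fun t => fderiv ℝ (fderiv ℝ f) (u, t) v) (Ioi a) :=
      (ContinuousLinearMap.apply ℝ ((ℝ × ℝ) →L[ℝ] ℝ) v).continuous.comp_continuousOn
        ((hg2sliceC u).mono (Ioi_subset_Ioi ha))
    exact (((ContinuousLinearMap.apply ℝ ℝ w).continuous.comp_continuousOn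
      h1).aestronglyMeasurable measurableSet_Ioi)
  refine ⟨?_, ?_⟩
  · -- smoothness of the corrector
    refine ContDiffOn.congr (((contDiff_snd.div_const 2).neg.contDiffOn).mul hΦC2) ?_
    intro x hx
    rw [hIeq x hx]
  · -- the PDE
    intro ξ hξ
    -- Part A : the x₁-second derivative
    have hKd : ∀ u : ℝ, HasDerivAt (fun u' => ∫ t in Ioi ξ.2, f (u', t))
        (∫ t in Ioi ξ.2, fderiv ℝ f (u, t) (1, 0)) u := by
      intro u
      have key := hasDerivAt_integral_of_dominated_loc_of_deriv_le
        (μ := volume.restrict (Ioi ξ.2)) (F := fun u' t => f (u', t))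
        (F' := fun u' t => fderiv ℝ f (u', t) (1, 0)) (x₀ := u)
        (bound := fun t => C * Real.exp (-α * t)) (Metric.ball_mem_nhds u one_pos)
        (Eventually.of_forall (fun u' => hmeasf u' ξ.2 hξ.le))
        (hintf u ξ.2 hξ.le) (hmeasd u ξ.2 (1, 0) hξ.le) ?_
        ((exp_neg_integrableOn_Ioi ξ.2 hα).const_mul C) ?_
      · exact key.2
      · filter_upwards [ae_restrict_mem measurableSet_Ioi] with t ht
        intro u' _
        have h0 : (0:ℝ) < t := lt_trans hξ ht
        calc ‖fderiv ℝ f (u', t) (1, 0)‖ = |deriv (fun x => f (x, t)) u'| := by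
              rw [Real.norm_eq_abs]
              exact congrArg abs (hd1 (u', t) h0).symm
          _ ≤ C * Real.exp (-α * t) := by simpa using (hdecay₁ (u', t) h0).1
      · filter_upwards [ae_restrict_mem measurableSet_Ioi] with t ht
        intro u' _
        have h0 : (0:ℝ) < t := lt_trans hξ ht
        exact hP1 (u', t) h0
    have hK1d : HasDerivAt (fun u' => ∫ t in Ioi ξ.2, fderiv ℝ f (u', t) (1, 0))
        (∫ t in Ioi ξ.2, fderiv ℝ (fderiv ℝ f) (ξ.1, t) (1, 0) (1, 0)) ξ.1 := by
      have key := hasDerivAt_integral_of_dominated_loc_of_deriv_le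
        (μ := volume.restrict (Ioi ξ.2)) (F := fun u' t => fderiv ℝ f (u', t) (1, 0))
        (F' := fun u' t => fderiv ℝ (fderiv ℝ f) (u', t) (1, 0) (1, 0)) (x₀ := ξ.1)
        (bound := fun t => C * Real.exp (-α * t)) (Metric.ball_mem_nhds ξ.1 one_pos)
        (Eventually.of_forall (fun u' => hmeasd u' ξ.2 (1, 0) hξ.le))
        ?_ (hmeasd2 ξ.1 ξ.2 (1, 0) (1, 0) hξ.le) ?_
        ((exp_neg_integrableOn_Ioi ξ.2 hα).const_mul C) ?_
      · exact key.2
      · refine integrableOn_of_expbound _ ξ.2 C α hα (hmeasd ξ.1 ξ.2 (1, 0) hξ.le) ?_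
        intro t ht
        have h0 : (0:ℝ) < t := lt_trans hξ ht
        calc ‖fderiv ℝ f (ξ.1, t) (1, 0)‖ = |deriv (fun x => f (x, t)) ξ.1| := by
              rw [Real.norm_eq_abs]
              exact congrArg abs (hd1 (ξ.1, t) h0).symm
          _ ≤ C * Real.exp (-α * t) := by simpa using (hdecay₁ (ξ.1, t) h0).1
      · filter_upwards [ae_restrict_mem measurableSet_Ioi] with t ht
        intro u' _
        have h0 : (0:ℝ) < t := lt_trans hξ ht
        calc ‖fderiv ℝ (fderiv ℝ f) (u', t) (1, 0) (1, 0)‖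
            = |iteratedDeriv 2 (fun x => f (x, t)) u'| := by
              rw [Real.norm_eq_abs]
              exact congrArg abs (hdd1 (u', t) h0).symm
          _ ≤ C * Real.exp (-α * t) := by simpa using (hdecay₂ (u', t) h0).1
      · filter_upwards [ae_restrict_mem measurableSet_Ioi] with t ht
        intro u' _
        have h0 : (0:ℝ) < t := lt_trans hξ ht
        exact hQ1v (u', t) h0 (1, 0)
    have hAde : deriv (fun u' => -(ξ.2 / 2) * ∫ t in Ioi ξ.2, f (u', t))
        = fun u => -(ξ.2 / 2) * ∫ t in Ioi ξ.2, fderiv ℝ f (u, t) (1, 0) :=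
      funext fun u => ((hKd u).const_mul (-(ξ.2 / 2))).deriv
    have hAval : iteratedDeriv 2 (fun u => -(ξ.2 / 2) * ∫ t in Ioi ξ.2, f (u, t)) ξ.1
        = -(ξ.2 / 2) * ∫ t in Ioi ξ.2, fderiv ℝ (fderiv ℝ f) (ξ.1, t) (1, 0) (1, 0) := by
      rw [show (2 : ℕ) = 1 + 1 from rfl, iteratedDeriv_succ, iteratedDeriv_one, hAde]
      exact (hK1d.const_mul (-(ξ.2 / 2))).deriv
    have hFTC : (∫ t in Ioi ξ.2, fderiv ℝ (fderiv ℝ f) (ξ.1, t) (0, 1) (0, 1))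
        = 0 - fderiv ℝ f ξ (0, 1) := by
      refine integral_Ioi_of_hasDerivAt_of_tendsto
        (f := fun t => fderiv ℝ f (ξ.1, t) (0, 1)) (m := 0) ?_ ?_ ?_ ?_
      · have hcics : ContinuousOn (fun t => fderiv ℝ f (ξ.1, t) (0, 1)) (Ioi (0:ℝ)) :=
          (ContinuousLinearMap.apply ℝ ℝ ((0:ℝ), (1:ℝ))).continuous.comp_continuousOn
            (hg1sliceC ξ.1)
        exact (hcics.continuousAt (Ioi_mem_nhds hξ)).continuousWithinAt
      · intro t ht
        exact hQ2v (ξ.1, t) (lt_trans hξ ht) (0, 1)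
      · refine integrableOn_of_expbound _ ξ.2 C α hα (hmeasd2 ξ.1 ξ.2 (0, 1) (0, 1) hξ.le) ?_
        intro t ht
        have h0 : (0:ℝ) < t := lt_trans hξ ht
        calc ‖fderiv ℝ (fderiv ℝ f) (ξ.1, t) (0, 1) (0, 1)‖
            = |iteratedDeriv 2 (fun x => f (ξ.1, x)) t| := by
              rw [Real.norm_eq_abs]
              exact congrArg abs (hdd2 (ξ.1, t) h0).symm
          _ ≤ C * Real.exp (-α * t) := by simpa using (hdecay₂ (ξ.1, t) h0).2.1
      · refine squeeze_zero_norm' ?_ (tendsto_expbound C α hα)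
        filter_upwards [eventually_gt_atTop (0:ℝ)] with t ht
        calc ‖fderiv ℝ f (ξ.1, t) (0, 1)‖ = |deriv (fun x => f (ξ.1, x)) t| := by
              rw [Real.norm_eq_abs]
              exact congrArg abs (hd2 (ξ.1, t) ht).symm
          _ ≤ C * Real.exp (-α * t) := by simpa using (hdecay₁ (ξ.1, t) ht).2
    have hAint : (∫ t in Ioi ξ.2, fderiv ℝ (fderiv ℝ f) (ξ.1, t) (1, 0) (1, 0))
        = fderiv ℝ f ξ (0, 1) := by
      have hcongr : EqOn (fun t => fderiv ℝ (fderiv ℝ f) (ξ.1, t) (1, 0) (1, 0))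
          (fun t => -(fderiv ℝ (fderiv ℝ f) (ξ.1, t) (0, 1) (0, 1))) (Ioi ξ.2) := by
        intro t ht
        simpa using hharm' (ξ.1, t) (lt_trans hξ ht)
      rw [setIntegral_congr_fun measurableSet_Ioi hcongr, integral_neg, hFTC]
      ring
    -- Part B : the x₂-second derivative
    have ha0 : (0:ℝ) < ξ.2 / 2 := by positivity
    have hmem2 : ξ.2 ∈ Ioi (ξ.2 / 2) := by
      simp only [mem_Ioi]
      linarith
    have hgint : IntegrableOn (fun t => f (ξ.1, t)) (Ioi (ξ.2 / 2)) :=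
      hintf ξ.1 (ξ.2 / 2) ha0.le
    have hIdecomp : ∀ x ∈ Ioi (ξ.2 / 2), (∫ t in Ioi x, f (ξ.1, t))
        = (∫ t in Ioi (ξ.2 / 2), f (ξ.1, t)) - ∫ t in (ξ.2 / 2)..x, f (ξ.1, t) := by
      intro x hx
      have hax : ξ.2 / 2 ≤ x := le_of_lt hx
      rw [intervalIntegral.integral_of_le hax]
      have hsplit := setIntegral_union (μ := volume) (f := fun t => f (ξ.1, t))
        (Ioc_disjoint_Ioi le_rfl) measurableSet_Ioi
        (hgint.mono_set Ioc_subset_Ioi_self) (hgint.mono_set (Ioi_subset_Ioi hax))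
      rw [Ioc_union_Ioi_eq_Ioi hax] at hsplit
      linarith
    have hJd : ∀ x ∈ Ioi (ξ.2 / 2),
        HasDerivAt (fun y => ∫ t in (ξ.2 / 2)..y, f (ξ.1, t)) (f (ξ.1, x)) x := by
      intro x hx
      have hx0 : (0:ℝ) < x := lt_trans ha0 hx
      refine intervalIntegral.integral_hasDerivAt_right ?_ ?_ ?_
      · refine ⟨hgint.mono_set Ioc_subset_Ioi_self, ?_⟩
        rw [Ioc_eq_empty (by intro h; exact absurd hx (by simp only [mem_Ioi, not_lt]; linarith))]
        exact integrableOn_empty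
      · exact (ContinuousOn.stronglyMeasurableAtFilter isOpen_Ioi (hsliceC ξ.1)) x hx0
      · exact (hsliceC ξ.1).continuousAt (Ioi_mem_nhds hx0)
    have hId : ∀ x ∈ Ioi (ξ.2 / 2),
        HasDerivAt (fun y => ∫ t in Ioi y, f (ξ.1, t)) (-f (ξ.1, x)) x := by
      intro x hx
      have h1 := (hasDerivAt_const x (∫ t in Ioi (ξ.2 / 2), f (ξ.1, t))).sub (hJd x hx)
      have hEv : (fun y => ∫ t in Ioi y, f (ξ.1, t)) =ᶠ[𝓝 x]
          (fun y => (∫ t in Ioi (ξ.2 / 2), f (ξ.1, t)) - ∫ t in (ξ.2 / 2)..y, f (ξ.1, t)) := by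
        filter_upwards [Ioi_mem_nhds hx] with y hy
        exact hIdecomp y hy
      have h2 := h1.congr_of_eventuallyEq hEv
      simpa using h2
    have hBd1 : ∀ x ∈ Ioi (ξ.2 / 2),
        HasDerivAt (fun y => -(y / 2) * ∫ t in Ioi y, f (ξ.1, t))
          (-(1 / 2) * (∫ t in Ioi x, f (ξ.1, t)) + (x / 2) * f (ξ.1, x)) x := by
      intro x hx
      have hc : HasDerivAt (fun y : ℝ => -(y / 2)) (-(1 / 2) : ℝ) x := by
        exact ((hasDerivAt_id x).div_const 2).neg.congr_deriv (by norm_num)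
      have h := hc.mul (hId x hx)
      refine h.congr_deriv ?_
      ring
    have hBde : deriv (fun y => -(y / 2) * ∫ t in Ioi y, f (ξ.1, t)) =ᶠ[𝓝 ξ.2]
        fun x => -(1 / 2) * (∫ t in Ioi x, f (ξ.1, t)) + (x / 2) * f (ξ.1, x) := by
      filter_upwards [Ioi_mem_nhds (show ξ.2 / 2 < ξ.2 by linarith)] with x hx
      exact (hBd1 x hx).deriv
    have hB2 : HasDerivAt
        (fun x => -(1 / 2) * (∫ t in Ioi x, f (ξ.1, t)) + (x / 2) * f (ξ.1, x))
        (f (ξ.1, ξ.2) + (ξ.2 / 2) * fderiv ℝ f ξ (0, 1)) ξ.2 := by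
      have h1 := (hId ξ.2 hmem2).const_mul (-(1 / 2) : ℝ)
      have h2 := ((hasDerivAt_id ξ.2).div_const 2).mul (hP2 ξ hξ)
      have h := h1.add h2
      refine h.congr_deriv ?_
      simp only [id_eq]
      ring
    have hBval : iteratedDeriv 2 (fun x₂ => -(x₂ / 2) * ∫ t in Ioi x₂, f (ξ.1, t)) ξ.2
        = f (ξ.1, ξ.2) + (ξ.2 / 2) * fderiv ℝ f ξ (0, 1) := by
      rw [show (2 : ℕ) = 1 + 1 from rfl, iteratedDeriv_succ, iteratedDeriv_one, hBde.deriv_eq]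
      exact hB2.deriv
    rw [hAval, hAint, hBval]
    have hfeta : f (ξ.1, ξ.2) = f ξ := rfl
    rw [hfeta]
    ring
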